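/- Let R = ((A_i, B_i))_{i<n} be a finite family of conditionals over Ω with A_i∩B_i ≠ ∅ and A_i∩B_iᶜ ≠ ∅ for every i, and let κ : Ω → ℕ be a finite-valued OCF. Then κ is a c-representation of R if and only if there exist rational numbers κ₀ and κ_i⁺, κ_i⁻ (i < n) such that (a) for every world ω, (κ(ω) : ℚ) = κ₀ + Σ_{i : ω ∈ A_i∩B_i} κ_i⁺ + Σ_{i : ω ∈ A_i∩B_iᶜ} κ_i⁻, and (b) for every i < n, κ_i⁻ − κ_i⁺ > min_{ω ∈ A_i∩B_i} (Σ_{j≠i, ω ∈ A_j∩B_j} κ_j⁺ + Σ_{j≠i, ω ∈ A_j∩B_jᶜ} κ_j⁻) − min_{ω ∈ A_i∩B_iᶜ} (Σ_{j≠i, ω ∈ A_j∩B_j} κ_j⁺ + Σ_{j≠i, ω ∈ A_j∩B_jᶜ} κ_j⁻). -/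

import Mathlib

open scoped Classical

/-- The rank of a set of worlds under a finite-valued OCF (in `ℕ∞`,
so that the empty set gets rank `∞`). -/
noncomputable def ocfRankN {Ω : Type*} (κ : Ω → ℕ) (S : Set Ω) : ℕ∞ :=
  ⨅ ω ∈ S, (κ ω : ℕ∞)

/-- A finite-valued OCF `κ` accepts the conditional `(B|A)` iff
`κ(A∩B) < κ(A∩Bᶜ)`. -/
noncomputable def Accepts {Ω : Type*} (κ : Ω → ℕ) (A B : Set Ω) : Prop :=
  ocfRankN κ (A ∩ B) < ocfRankN κ (A ∩ Bᶜ)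

/-- The conditional-structure map of a finite family of conditionals. -/
noncomputable def sigmaR {Ω : Type*} {n : ℕ} (R : Fin n → Set Ω × Set Ω) (ω : Ω) :
    (Fin n → ℤ) × (Fin n → ℤ) :=
  (fun i => if ω ∈ (R i).1 ∩ (R i).2 then 1 else 0,
   fun i => if ω ∈ (R i).1 ∩ ((R i).2)ᶜ then 1 else 0)

/-- A finite-valued OCF is indifferent with respect to `R`. -/
noncomputable def IndifferentFin {Ω : Type*} [Fintype Ω] {n : ℕ}
    (κ : Ω → ℕ) (R : Fin n → Set Ω × Set Ω) : Prop :=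
  ∀ d : Ω → ℤ, ∑ ω, d ω = 0 → ∑ ω, d ω • sigmaR R ω = 0 →
    ∑ ω, d ω * (κ ω : ℤ) = 0

/-- `κ` is a c-representation of `R`: it accepts every conditional of `R`
and is indifferent with respect to `R`. -/
noncomputable def CRepresentation {Ω : Type*} [Fintype Ω] {n : ℕ}
    (κ : Ω → ℕ) (R : Fin n → Set Ω × Set Ω) : Prop :=
  (∀ i, Accepts κ (R i).1 (R i).2) ∧ IndifferentFin κ R

/- ### Auxiliary lemmas -/

lemma ocfRankN_eq_inf' {Ω : Type*} [Fintype Ω] (κ : Ω → ℕ) (S : Set Ω) [Fintype S] (h : S.Nonempty) :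
    ocfRankN κ S = ((S.toFinset.inf' (Set.toFinset_nonempty.mpr h) κ : ℕ) : ℕ∞) := by
  have hmin : ∀ a b : ℕ, ((min a b : ℕ) : ℕ∞) = (a : ℕ∞) ⊓ (b : ℕ∞) := by
    intro a b
    rcases le_total a b with h'|h' <;>
      simp [min_eq_left, min_eq_right, h', inf_eq_left.mpr, inf_eq_right.mpr,
        (Nat.cast_le (α := ℕ∞)).mpr h']
  rw [ocfRankN]
  have h1 : (⨅ ω ∈ S, (κ ω : ℕ∞)) = S.toFinset.inf (fun ω => (κ ω : ℕ∞)) := by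
    rw [Finset.inf_eq_iInf]
    exact le_antisymm (le_iInf₂ fun ω hω => iInf₂_le ω (Set.mem_toFinset.mp hω))
      (le_iInf₂ fun ω hω => iInf₂_le ω (Set.mem_toFinset.mpr hω))
  rw [h1, ← Finset.inf'_eq_inf (Set.toFinset_nonempty.mpr h)]
  exact (Finset.apply_inf'_eq_inf'_comp _ (fun m : ℕ => (m : ℕ∞))
    (fun a b => by rw [← hmin])).symm

lemma inf'_const_add {α : Type*} (s : Finset α) (hs : s.Nonempty) (c : ℚ) (f : α → ℚ) :
    s.inf' hs (fun a => c + f a) = c + s.inf' hs f := by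
  apply le_antisymm
  · obtain ⟨a, ha, h⟩ := s.exists_mem_eq_inf' hs f
    rw [h]
    exact Finset.inf'_le _ ha
  · rw [Finset.le_inf'_iff]
    intro a ha
    exact add_le_add_right (Finset.inf'_le _ ha) c

lemma sum_filter_insert {n : ℕ} (i : Fin n) (P : Fin n → Prop) [DecidablePred P]
    (hP : P i) (f : Fin n → ℚ) :
    ∑ j ∈ Finset.univ.filter P, f j
      = f i + ∑ j ∈ Finset.univ.filter (fun j => j ≠ i ∧ P j), f j := by
  have h : Finset.univ.filter P
      = insert i (Finset.univ.filter (fun j => j ≠ i ∧ P j)) := by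
    ext j
    simp only [Finset.mem_filter, Finset.mem_univ, true_and, Finset.mem_insert]
    constructor
    · intro hj
      rcases eq_or_ne j i with h'|h'
      · exact Or.inl h'
      · exact Or.inr ⟨h', hj⟩
    · rintro (rfl|⟨_, hj⟩)
      exacts [hP, hj]
  rw [h, Finset.sum_insert (by simp)]

lemma sum_filter_eq_of_not {n : ℕ} (i : Fin n) (P : Fin n → Prop) [DecidablePred P]
    (hP : ¬ P i) (f : Fin n → ℚ) :
    ∑ j ∈ Finset.univ.filter P, f j
      = ∑ j ∈ Finset.univ.filter (fun j => j ≠ i ∧ P j), f j := by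
  congr 1
  ext j
  simp only [Finset.mem_filter, Finset.mem_univ, true_and]
  constructor
  · intro hj
    exact ⟨fun h => hP (h ▸ hj), hj⟩
  · exact fun h => h.2

lemma sigma_comp {Ω : Type*} [Fintype Ω] {n : ℕ} (R : Fin n → Set Ω × Set Ω) (d : Ω → ℤ)
    (h : ∑ ω, d ω • sigmaR R ω = 0) (i : Fin n) :
    (∑ ω, d ω * (if ω ∈ (R i).1 ∩ (R i).2 then 1 else 0) = 0) ∧
    (∑ ω, d ω * (if ω ∈ (R i).1 ∩ ((R i).2)ᶜ then 1 else 0) = 0) := by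
  constructor
  · have h1 := congrFun (congrArg Prod.fst h) i
    simpa [sigmaR, Prod.fst_sum, Finset.sum_apply, smul_eq_mul] using h1
  · have h1 := congrFun (congrArg Prod.snd h) i
    simpa [sigmaR, Prod.snd_sum, Finset.sum_apply, smul_eq_mul] using h1

noncomputable def evFun {Ω : Type*} [Fintype Ω] (g : Ω → ℚ) : (Ω → ℚ) →ₗ[ℚ] ℚ where
  toFun d := ∑ ω, d ω * g ω
  map_add' := by intro x y; simp [add_mul, Finset.sum_add_distrib]
  map_smul' := by intro c x; simp [Finset.mul_sum, mul_assoc]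

lemma evFun_apply {Ω : Type*} [Fintype Ω] (g d : Ω → ℚ) :
    evFun g d = ∑ ω, d ω * g ω := rfl

lemma evFun_single {Ω : Type*} [Fintype Ω] (g : Ω → ℚ) (ω : Ω) :
    evFun g (Pi.single ω 1) = g ω := by
  rw [evFun_apply, Finset.sum_eq_single ω]
  · simp
  · intro b _ hb; simp [Pi.single_eq_of_ne hb]
  · simp

lemma accepts_iff_ineq {Ω : Type*} [Fintype Ω] {n : ℕ}
    (R : Fin n → Set Ω × Set Ω)
    (hne : ∀ i, ((R i).1 ∩ (R i).2).Nonempty ∧ ((R i).1 ∩ ((R i).2)ᶜ).Nonempty)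
    (κ : Ω → ℕ) (κ₀ : ℚ) (kp km : Fin n → ℚ)
    (ha : ∀ ω, (κ ω : ℚ) = κ₀ +
          (∑ i ∈ Finset.univ.filter fun i => ω ∈ (R i).1 ∩ (R i).2, kp i) +
          (∑ i ∈ Finset.univ.filter fun i => ω ∈ (R i).1 ∩ ((R i).2)ᶜ, km i))
    (i : Fin n) :
    Accepts κ (R i).1 (R i).2 ↔
      km i - kp i >
        Finset.inf' ((R i).1 ∩ (R i).2).toFinset
          (Set.toFinset_nonempty.mpr (hne i).1)
          (fun ω =>
            (∑ j ∈ Finset.univ.filter fun j => j ≠ i ∧ ω ∈ (R j).1 ∩ (R j).2, kp j) +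
            (∑ j ∈ Finset.univ.filter fun j => j ≠ i ∧ ω ∈ (R j).1 ∩ ((R j).2)ᶜ, km j)) -
        Finset.inf' ((R i).1 ∩ ((R i).2)ᶜ).toFinset
          (Set.toFinset_nonempty.mpr (hne i).2)
          (fun ω =>
            (∑ j ∈ Finset.univ.filter fun j => j ≠ i ∧ ω ∈ (R j).1 ∩ (R j).2, kp j) +
            (∑ j ∈ Finset.univ.filter fun j => j ≠ i ∧ ω ∈ (R j).1 ∩ ((R j).2)ᶜ, km j)) := by
  set V : Ω → ℚ := fun ω =>
    (∑ j ∈ Finset.univ.filter fun j => j ≠ i ∧ ω ∈ (R j).1 ∩ (R j).2, kp j) +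
    (∑ j ∈ Finset.univ.filter fun j => j ≠ i ∧ ω ∈ (R j).1 ∩ ((R j).2)ᶜ, km j) with hV
  have e1 : Finset.inf' ((R i).1 ∩ (R i).2).toFinset (Set.toFinset_nonempty.mpr (hne i).1)
      (fun ω => ((κ ω : ℕ) : ℚ))
      = (κ₀ + kp i) + Finset.inf' ((R i).1 ∩ (R i).2).toFinset
          (Set.toFinset_nonempty.mpr (hne i).1) V := by
    rw [← inf'_const_add]
    refine Finset.inf'_congr _ rfl ?_
    intro ω hω
    rw [Set.mem_toFinset] at hω
    rw [ha ω, sum_filter_insert i (fun j => ω ∈ (R j).1 ∩ (R j).2) hω kp,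
        sum_filter_eq_of_not i (fun j => ω ∈ (R j).1 ∩ ((R j).2)ᶜ)
          (fun h => h.2 hω.2) km, hV]
    ring
  have e2 : Finset.inf' ((R i).1 ∩ ((R i).2)ᶜ).toFinset (Set.toFinset_nonempty.mpr (hne i).2)
      (fun ω => ((κ ω : ℕ) : ℚ))
      = (κ₀ + km i) + Finset.inf' ((R i).1 ∩ ((R i).2)ᶜ).toFinset
          (Set.toFinset_nonempty.mpr (hne i).2) V := by
    rw [← inf'_const_add]
    refine Finset.inf'_congr _ rfl ?_
    intro ω hω
    rw [Set.mem_toFinset] at hω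
    rw [ha ω, sum_filter_insert i (fun j => ω ∈ (R j).1 ∩ ((R j).2)ᶜ) hω km,
        sum_filter_eq_of_not i (fun j => ω ∈ (R j).1 ∩ (R j).2)
          (fun h => hω.2 h.2) kp, hV]
    ring
  rw [Accepts, ocfRankN_eq_inf' κ _ (hne i).1, ocfRankN_eq_inf' κ _ (hne i).2, Nat.cast_lt,
    ← Nat.cast_lt (α := ℚ), Nat.cast_finsetInf', Nat.cast_finsetInf', e1, e2]
  constructor <;> intro h <;> [skip; skip] <;> · simp only [gt_iff_lt] at *; linarith

theorem stmt5 {Ω : Type*} [Fintype Ω] [Nonempty Ω] {n : ℕ}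
    (R : Fin n → Set Ω × Set Ω)
    (hne : ∀ i, ((R i).1 ∩ (R i).2).Nonempty ∧ ((R i).1 ∩ ((R i).2)ᶜ).Nonempty)
    (κ : Ω → ℕ) (hκ : ∃ ω, κ ω = 0) :
    CRepresentation κ R ↔
      ∃ (κ₀ : ℚ) (kp km : Fin n → ℚ),
        (∀ ω, (κ ω : ℚ) = κ₀ +
          (∑ i ∈ Finset.univ.filter fun i => ω ∈ (R i).1 ∩ (R i).2, kp i) +
          (∑ i ∈ Finset.univ.filter fun i => ω ∈ (R i).1 ∩ ((R i).2)ᶜ, km i)) ∧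
        (∀ i, km i - kp i >
          Finset.inf' ((R i).1 ∩ (R i).2).toFinset
            (Set.toFinset_nonempty.mpr (hne i).1)
            (fun ω =>
              (∑ j ∈ Finset.univ.filter fun j => j ≠ i ∧ ω ∈ (R j).1 ∩ (R j).2, kp j) +
              (∑ j ∈ Finset.univ.filter fun j => j ≠ i ∧ ω ∈ (R j).1 ∩ ((R j).2)ᶜ, km j)) -
          Finset.inf' ((R i).1 ∩ ((R i).2)ᶜ).toFinset
            (Set.toFinset_nonempty.mpr (hne i).2)
            (fun ω =>
              (∑ j ∈ Finset.univ.filter fun j => j ≠ i ∧ ω ∈ (R j).1 ∩ (R j).2, kp j) +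
              (∑ j ∈ Finset.univ.filter fun j => j ≠ i ∧ ω ∈ (R j).1 ∩ ((R j).2)ᶜ, km j))) := by
  constructor
  · rintro ⟨hacc, hind⟩
    let L : Option (Fin n ⊕ Fin n) → ((Ω → ℚ) →ₗ[ℚ] ℚ) := fun o =>
      match o with
      | none => evFun (fun _ => 1)
      | some (Sum.inl i) => evFun (fun ω => if ω ∈ (R i).1 ∩ (R i).2 then 1 else 0)
      | some (Sum.inr i) => evFun (fun ω => if ω ∈ (R i).1 ∩ ((R i).2)ᶜ then 1 else 0)
    have hLnone : L none = evFun (fun _ => 1) := rfl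
    have hLp : ∀ i, L (some (Sum.inl i))
        = evFun (fun ω => if ω ∈ (R i).1 ∩ (R i).2 then 1 else 0) := fun i => rfl
    have hLm : ∀ i, L (some (Sum.inr i))
        = evFun (fun ω => if ω ∈ (R i).1 ∩ ((R i).2)ᶜ then 1 else 0) := fun i => rfl
    have hker : (⨅ o, LinearMap.ker (L o))
        ≤ LinearMap.ker (evFun (fun ω => (κ ω : ℚ))) := by
      intro q hq
      simp only [Submodule.mem_iInf, LinearMap.mem_ker] at hq ⊢
      have hqnone := hq none
      rw [hLnone, evFun_apply] at hqnone
      have hq0 : (∑ ω, q ω) = 0 := by simpa using hqnone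
      have hqp : ∀ i, (∑ ω, q ω * (if ω ∈ (R i).1 ∩ (R i).2 then 1 else 0)) = 0 := by
        intro i
        have h := hq (some (Sum.inl i)); rw [hLp i, evFun_apply] at h; exact h
      have hqm : ∀ i, (∑ ω, q ω * (if ω ∈ (R i).1 ∩ ((R i).2)ᶜ then 1 else 0)) = 0 := by
        intro i
        have h := hq (some (Sum.inr i)); rw [hLm i, evFun_apply] at h; exact h
      set N : ℕ := ∏ ω, (q ω).den with hN
      have hNpos : (0 : ℚ) < N := by
        have : 0 < N := Finset.prod_pos fun ω _ => (q ω).pos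
        exact_mod_cast this
      set D : Ω → ℤ := fun ω => ((N : ℚ) * q ω).num with hD
      have key : ∀ ω, ((D ω : ℚ)) = (N : ℚ) * q ω := by
        intro ω
        obtain ⟨M, hM⟩ : ((q ω).den : ℤ) ∣ (N : ℤ) :=
          Int.natCast_dvd_natCast.mpr (Finset.dvd_prod_of_mem _ (Finset.mem_univ ω))
        have h2 : (N : ℚ) = ((q ω).den : ℚ) * (M : ℚ) := by exact_mod_cast hM
        have h3 : q ω * ((q ω).den : ℚ) = ((q ω).num : ℚ) := Rat.mul_den_eq_num _
        have h1 : (N : ℚ) * q ω = ((M * (q ω).num : ℤ) : ℚ) := by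
          rw [h2]
          push_cast
          rw [← h3]
          ring
        show ((((N : ℚ) * q ω).num : ℤ) : ℚ) = (N : ℚ) * q ω
        rw [h1, Rat.num_intCast]
      have hsum0 : ∑ ω, D ω = 0 := by
        have : ((∑ ω, D ω : ℤ) : ℚ) = 0 := by
          push_cast [key]
          rw [← Finset.mul_sum, hq0, mul_zero]
        exact_mod_cast this
      have comp : ∀ (P : Ω → Prop) (inst : DecidablePred P),
          (∑ ω, q ω * (if P ω then 1 else 0)) = 0 →
          (∑ ω, D ω * (if P ω then (1 : ℤ) else 0)) = 0 := by
        intro P inst hP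
        have : ((∑ ω, D ω * (if P ω then (1 : ℤ) else 0) : ℤ) : ℚ) = 0 := by
          push_cast [key, apply_ite (fun z : ℤ => (z : ℚ))]
          calc ∑ ω, (N : ℚ) * q ω * (if P ω then 1 else 0)
              = (N : ℚ) * ∑ ω, q ω * (if P ω then 1 else 0) := by
                rw [Finset.mul_sum]
                exact Finset.sum_congr rfl fun ω _ => by ring
            _ = 0 := by rw [hP, mul_zero]
        exact_mod_cast this
      have hsig : ∑ ω, D ω • sigmaR R ω = 0 := by
        refine Prod.ext ?_ ?_ <;> funext i
        · have := comp _ _ (hqp i)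
          simpa [sigmaR, Prod.fst_sum, Finset.sum_apply, smul_eq_mul] using this
        · have := comp _ _ (hqm i)
          simpa [sigmaR, Prod.snd_sum, Finset.sum_apply, smul_eq_mul] using this
      have hconc := hind D hsum0 hsig
      rw [evFun_apply]
      have hfin : (N : ℚ) * (∑ ω, q ω * (κ ω : ℚ)) = 0 := by
        rw [Finset.mul_sum]
        calc ∑ ω, (N : ℚ) * (q ω * (κ ω : ℚ))
            = ∑ ω, (D ω : ℚ) * (κ ω : ℚ) :=
              Finset.sum_congr rfl fun ω _ => by rw [key ω]; ring
          _ = ((∑ ω, D ω * (κ ω : ℤ) : ℤ) : ℚ) := by push_cast; ring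
          _ = 0 := by rw [hconc]; norm_num
      exact (mul_eq_zero.mp hfin).resolve_left (ne_of_gt hNpos)
    have hspan : evFun (fun ω => (κ ω : ℚ)) ∈ Submodule.span ℚ (Set.range L) :=
      mem_span_of_iInf_ker_le_ker hker
    obtain ⟨c, hc⟩ := (Submodule.mem_span_range_iff_exists_fun ℚ).mp hspan
    have ha : ∀ ω, (κ ω : ℚ) = c none +
        (∑ i ∈ Finset.univ.filter fun i => ω ∈ (R i).1 ∩ (R i).2,
          c (some (Sum.inl i))) +
        (∑ i ∈ Finset.univ.filter fun i => ω ∈ (R i).1 ∩ ((R i).2)ᶜ,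
          c (some (Sum.inr i))) := by
      intro ω
      have h1 := congrArg (fun F : (Ω → ℚ) →ₗ[ℚ] ℚ => F (Pi.single ω 1)) hc
      simp only [LinearMap.coe_sum, Finset.sum_apply, LinearMap.smul_apply,
        smul_eq_mul] at h1
      rw [Fintype.sum_option, Fintype.sum_sum_type] at h1
      simp only [hLnone, hLp, hLm, evFun_single, mul_one, mul_ite, mul_zero] at h1
      rw [Finset.sum_filter, Finset.sum_filter]
      linarith [h1]
    exact ⟨c none, fun i => c (some (Sum.inl i)), fun i => c (some (Sum.inr i)), ha,
      fun i => (accepts_iff_ineq R hne κ _ _ _ ha i).mp (hacc i)⟩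
  · rintro ⟨κ₀, kp, km, ha, hb⟩
    refine ⟨fun i => (accepts_iff_ineq R hne κ κ₀ kp km ha i).mpr (hb i), ?_⟩
    intro d hd0 hdσ
    have hp : ∀ i, ∑ ω, d ω * (if ω ∈ (R i).1 ∩ (R i).2 then 1 else 0) = 0 :=
      fun i => (sigma_comp R d hdσ i).1
    have hm : ∀ i, ∑ ω, d ω * (if ω ∈ (R i).1 ∩ ((R i).2)ᶜ then 1 else 0) = 0 :=
      fun i => (sigma_comp R d hdσ i).2
    have castsum : ∀ (P : Ω → Prop) (inst : DecidablePred P),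
        (∑ ω, (d ω : ℚ) * (if P ω then 1 else 0))
          = ((∑ ω, d ω * (if P ω then (1 : ℤ) else 0) : ℤ) : ℚ) := by
      intro P inst
      push_cast
      refine Finset.sum_congr rfl fun ω _ => ?_
      by_cases h : P ω <;> simp [h]
    have swap : ∀ (g : Fin n → ℚ) (P : Ω → Fin n → Prop) (inst : ∀ ω, DecidablePred (P ω)),
        ∑ ω, (d ω : ℚ) * (∑ i ∈ Finset.univ.filter (P ω), g i)
          = ∑ i, g i * (∑ ω, (d ω : ℚ) * (if P ω i then 1 else 0)) := by
      intro g P inst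
      simp only [Finset.sum_filter, Finset.mul_sum]
      rw [Finset.sum_comm]
      refine Finset.sum_congr rfl fun i _ => ?_
      refine Finset.sum_congr rfl fun ω _ => ?_
      by_cases h : P ω i <;> simp [h, mul_comm]
    have key : ((∑ ω, d ω * (κ ω : ℤ) : ℤ) : ℚ) = 0 := by
      push_cast
      calc ∑ ω, (d ω : ℚ) * (κ ω : ℚ)
          = ∑ ω, (d ω : ℚ) * (κ₀ +
              (∑ i ∈ Finset.univ.filter fun i => ω ∈ (R i).1 ∩ (R i).2, kp i) +
              (∑ i ∈ Finset.univ.filter fun i => ω ∈ (R i).1 ∩ ((R i).2)ᶜ, km i)) :=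
            Finset.sum_congr rfl fun ω _ => by rw [ha ω]
        _ = (∑ ω, (d ω : ℚ) * κ₀) +
            (∑ ω, (d ω : ℚ) *
              (∑ i ∈ Finset.univ.filter fun i => ω ∈ (R i).1 ∩ (R i).2, kp i)) +
            (∑ ω, (d ω : ℚ) *
              (∑ i ∈ Finset.univ.filter fun i => ω ∈ (R i).1 ∩ ((R i).2)ᶜ, km i)) := by
            simp only [mul_add, Finset.sum_add_distrib]
        _ = 0 := by
            rw [swap kp (fun ω i => ω ∈ (R i).1 ∩ (R i).2) inferInstance,
              swap km (fun ω i => ω ∈ (R i).1 ∩ ((R i).2)ᶜ) inferInstance, ← Finset.sum_mul]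
            have h0 : (∑ ω, (d ω : ℚ)) = 0 := by exact_mod_cast hd0
            have hp' : ∀ i, (∑ ω, (d ω : ℚ) *
                (if ω ∈ (R i).1 ∩ (R i).2 then 1 else 0)) = 0 := by
              intro i; rw [castsum _ inferInstance]; exact_mod_cast hp i
            have hm' : ∀ i, (∑ ω, (d ω : ℚ) *
                (if ω ∈ (R i).1 ∩ ((R i).2)ᶜ then 1 else 0)) = 0 := by
              intro i; rw [castsum _ inferInstance]; exact_mod_cast hm i
            have e1 : (∑ i, kp i * (∑ ω, (d ω : ℚ) *
                (if ω ∈ (R i).1 ∩ (R i).2 then 1 else 0))) = 0 :=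
              Finset.sum_eq_zero fun i _ => by rw [hp' i, mul_zero]
            have e2 : (∑ i, km i * (∑ ω, (d ω : ℚ) *
                (if ω ∈ (R i).1 ∩ ((R i).2)ᶜ then 1 else 0))) = 0 :=
              Finset.sum_eq_zero fun i _ => by rw [hm' i, mul_zero]
            rw [h0, e1, e2]
            simp
    exact_mod_cast key
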